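/- Let s ≥ 1 and let U be an r×d random matrix whose entries are i.i.d. Achlioptas random variables with parameter s (taking value +√s with probability 1/(2s), −√s with probability 1/(2s), and 0 with probability 1 − 1/s), with r ≥ 1 and d ≥ 1. Then for every fixed vector g ∈ ℝ^d, E[‖UᵀU g‖₂²] = (r² + r(d + s − 2))·‖g‖₂². -/

import Mathlib

open MeasureTheory ProbabilityTheory Matrix

/-- The Achlioptas distribution with parameter `s ≥ 1`: value `+√s` with probability `1/(2s)`,
`-√s` with probability `1/(2s)` and `0` with probability `1 - 1/s`. -/
noncomputable def achMeasure (s : ℝ) : Measure ℝ :=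
  ENNReal.ofReal (1 / (2 * s)) • Measure.dirac (Real.sqrt s)
    + ENNReal.ofReal (1 / (2 * s)) • Measure.dirac (-Real.sqrt s)
    + ENNReal.ofReal (1 - 1 / s) • Measure.dirac 0

lemma integrable_dirac' (f : ℝ → ℝ) (a : ℝ) : Integrable f (Measure.dirac a) := by
  have h : f =ᵐ[Measure.dirac a] (fun _ => f a) := by
    rw [ae_dirac_eq]; exact Filter.eventually_pure.2 rfl
  exact (integrable_const (f a)).congr h.symm

lemma ach_integral (s : ℝ) (hs : 1 ≤ s) (f : ℝ → ℝ) :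
    ∫ x, f x ∂achMeasure s
      = (1 / (2 * s)) * f (Real.sqrt s) + (1 / (2 * s)) * f (-Real.sqrt s)
        + (1 - 1 / s) * f 0 := by
  have hs0 : (0 : ℝ) < s := lt_of_lt_of_le one_pos hs
  have h1 : (0 : ℝ) ≤ 1 / (2 * s) := by positivity
  have h2 : (0 : ℝ) ≤ 1 - 1 / s := by
    rw [sub_nonneg]; exact (div_le_one hs0).2 hs
  have hint : ∀ (c : ℝ) (a : ℝ), Integrable f (ENNReal.ofReal c • Measure.dirac a) :=
    fun c a => (integrable_dirac' f a).smul_measure ENNReal.ofReal_ne_top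
  unfold achMeasure
  rw [integral_add_measure ((hint _ _).add_measure (hint _ _)) (hint _ _),
    integral_add_measure (hint _ _) (hint _ _),
    integral_smul_measure, integral_smul_measure, integral_smul_measure,
    integral_dirac, integral_dirac, integral_dirac,
    ENNReal.toReal_ofReal h1, ENNReal.toReal_ofReal h2]
  simp [smul_eq_mul]

lemma ach_mom (s : ℝ) (hs : 1 ≤ s) :
    (∫ x, x ^ 1 ∂achMeasure s) = 0 ∧ (∫ x, x ^ 2 ∂achMeasure s) = 1 ∧
    (∫ x, x ^ 3 ∂achMeasure s) = 0 ∧ (∫ x, x ^ 4 ∂achMeasure s) = s := by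
  have hs0 : (0 : ℝ) < s := lt_of_lt_of_le one_pos hs
  have hsq : Real.sqrt s ^ 2 = s := Real.sq_sqrt hs0.le
  have hne : s ≠ 0 := ne_of_gt hs0
  have h4 : Real.sqrt s ^ 4 = s ^ 2 := by
    rw [show (4 : ℕ) = 2 * 2 from rfl, pow_mul, hsq]
  refine ⟨?_, ?_, ?_, ?_⟩ <;> rw [ach_integral s hs]
  · ring
  · ring_nf; rw [hsq]; field_simp
  · ring
  · ring_nf; rw [h4]; field_simp

lemma indep_prod_integral {Ω : Type*} [MeasurableSpace Ω] {P : Measure Ω}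
    [IsProbabilityMeasure P] {ι : Type*} {Y : ι → Ω → ℝ}
    (hY : iIndepFun Y P) (hm : ∀ i, Measurable (Y i))
    (t : Finset ι) :
    ∫ ω, ∏ i ∈ t, Y i ω ∂P = ∏ i ∈ t, ∫ ω, Y i ω ∂P := by
  classical
  induction t using Finset.cons_induction with
  | empty => simp
  | cons a t ha ih =>
    simp only [Finset.prod_cons]
    have hind : IndepFun (fun ω => ∏ i ∈ t, Y i ω) (Y a) P := by
      have := hY.indepFun_finsetProd_of_notMem hm ha
      have he : (∏ j ∈ t, Y j) = fun ω => ∏ i ∈ t, Y i ω := by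
        funext ω; simp [Finset.prod_apply]
      rwa [he] at this
    have hmp : Measurable (fun ω => ∏ i ∈ t, Y i ω) :=
      Finset.measurable_prod _ (fun i _ => hm i)
    have := hind.symm.integral_fun_mul_eq_mul_integral (hm a).aestronglyMeasurable hmp.aestronglyMeasurable
    rw [this, ih]

lemma ach_bound (s : ℝ) (hs : 1 ≤ s) :
    achMeasure s {x : ℝ | ¬ |x| ≤ Real.sqrt s} = 0 := by
  have h0 : (0:ℝ) ≤ Real.sqrt s := Real.sqrt_nonneg s
  have hA : MeasurableSet {x : ℝ | ¬ |x| ≤ Real.sqrt s} :=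
    (measurableSet_le measurable_abs measurable_const).compl
  unfold achMeasure
  rw [Measure.add_apply, Measure.add_apply, Measure.smul_apply, Measure.smul_apply,
    Measure.smul_apply, Measure.dirac_apply' _ hA, Measure.dirac_apply' _ hA,
    Measure.dirac_apply' _ hA]
  have m1 : Real.sqrt s ∉ {x : ℝ | ¬ |x| ≤ Real.sqrt s} := by
    simp [abs_of_nonneg h0]
  have m2 : -Real.sqrt s ∉ {x : ℝ | ¬ |x| ≤ Real.sqrt s} := by
    simp [abs_of_nonpos (neg_nonpos.2 h0)]
  have m3 : (0:ℝ) ∉ {x : ℝ | ¬ |x| ≤ Real.sqrt s} := by simp [h0]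
  rw [Set.indicator_of_notMem m1, Set.indicator_of_notMem m2, Set.indicator_of_notMem m3]
  simp

/-- For an `r × d` random matrix `U` with i.i.d. Achlioptas(`s`) entries, `s ≥ 1`, and any fixed
`g ∈ ℝ^d`, `E[‖Uᵀ U g‖₂²] = (r² + r (d + s - 2)) ‖g‖₂²`. -/
theorem stmt2 {Ωs : Type*} [MeasurableSpace Ωs] (P : Measure Ωs) [IsProbabilityMeasure P]
    (s : ℝ) (hs : 1 ≤ s)
    (r d : ℕ) (hr : 1 ≤ r) (hd : 1 ≤ d)
    (U : Ωs → Matrix (Fin r) (Fin d) ℝ)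
    (hMeas : ∀ i j, Measurable (fun ω => U ω i j))
    (hIndep : iIndepFun
      (fun p : Fin r × Fin d => fun ω => U ω p.1 p.2) P)
    (hLaw : ∀ i j, Measure.map (fun ω => U ω i j) P = achMeasure s)
    (g : Fin d → ℝ) :
    ∫ ω, ∑ j, ((U ω)ᵀ *ᵥ (U ω *ᵥ g)) j ^ 2 ∂P
      = ((r : ℝ) ^ 2 + (r : ℝ) * ((d : ℝ) + s - 2)) * ∑ j, g j ^ 2 := by
  classical
  have hs0 : (0 : ℝ) < s := lt_of_lt_of_le one_pos hs
  set X : Fin r × Fin d → Ωs → ℝ := fun p ω => U ω p.1 p.2 with hXdef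
  have hXm : ∀ p, Measurable (X p) := fun p => hMeas p.1 p.2
  -- single moments
  have mom : ∀ (p : Fin r × Fin d) (n : ℕ),
      ∫ ω, X p ω ^ n ∂P = ∫ x, x ^ n ∂achMeasure s := by
    intro p n
    rw [← hLaw p.1 p.2]
    exact (integral_map (hXm p).aemeasurable
      (measurable_id.pow_const n).aestronglyMeasurable).symm
  obtain ⟨M1, M2, M3, M4⟩ := ach_mom s hs
  -- a.e. bound
  have hbd : ∀ p, ∀ᵐ ω ∂P, |X p ω| ≤ Real.sqrt s := by
    intro p
    rw [ae_iff]
    have hA : MeasurableSet {x : ℝ | ¬ |x| ≤ Real.sqrt s} :=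
      (measurableSet_le measurable_abs measurable_const).compl
    have h1 : {ω | ¬|X p ω| ≤ Real.sqrt s} = X p ⁻¹' {x | ¬ |x| ≤ Real.sqrt s} := rfl
    rw [h1, ← Measure.map_apply (hXm p) hA, hLaw p.1 p.2]
    exact ach_bound s hs
  -- integrability of monomials
  have hmono_int : ∀ a b c e : Fin r × Fin d,
      Integrable (fun ω => X a ω * X b ω * X c ω * X e ω) P := by
    intro a b c e
    refine Integrable.mono' (integrable_const (Real.sqrt s ^ 4))
      (((((hXm a).mul (hXm b)).mul (hXm c)).mul (hXm e)).aestronglyMeasurable) ?_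
    filter_upwards [hbd a, hbd b, hbd c, hbd e] with ω h1 h2 h3 h4
    rw [Real.norm_eq_abs, abs_mul, abs_mul, abs_mul]
    have h0 : (0:ℝ) ≤ Real.sqrt s := Real.sqrt_nonneg s
    calc |X a ω| * |X b ω| * |X c ω| * |X e ω|
        ≤ Real.sqrt s * Real.sqrt s * Real.sqrt s * Real.sqrt s := by
          gcongr <;> positivity
      _ = Real.sqrt s ^ 4 := by ring
  -- product formula
  have hprod : ∀ (m : Fin r × Fin d → ℕ) (t : Finset (Fin r × Fin d)),
      ∫ ω, ∏ p ∈ t, X p ω ^ m p ∂P = ∏ p ∈ t, ∫ ω, X p ω ^ m p ∂P := by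
    intro m t
    exact indep_prod_integral
      (hIndep.comp (fun p x => x ^ m p) (fun p => measurable_id.pow_const (m p)))
      (fun p => (hXm p).pow_const (m p)) t
  -- two-variable expectations
  have E2 : ∀ (a b : Fin r × Fin d), a ≠ b → ∀ na nb : ℕ,
      ∫ ω, X a ω ^ na * X b ω ^ nb ∂P
        = (∫ x, x ^ na ∂achMeasure s) * ∫ x, x ^ nb ∂achMeasure s := by
    intro a b hab na nb
    have hba : ¬ (b = a) := fun hh => hab hh.symm
    have h := hprod (fun p => if p = a then na else nb) {a, b}
    simp only [Finset.prod_pair hab, if_neg hba, eq_self_iff_true, if_true] at h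
    rw [h, mom, mom]
  -- three-variable expectations
  have E3 : ∀ (a b c : Fin r × Fin d), a ≠ b → a ≠ c → b ≠ c → ∀ na nb nc : ℕ,
      ∫ ω, X a ω ^ na * X b ω ^ nb * X c ω ^ nc ∂P
        = (∫ x, x ^ na ∂achMeasure s) * (∫ x, x ^ nb ∂achMeasure s)
          * ∫ x, x ^ nc ∂achMeasure s := by
    intro a b c hab hac hbc na nb nc
    have hba : ¬ (b = a) := fun hh => hab hh.symm
    have hca : ¬ (c = a) := fun hh => hac hh.symm
    have hcb : ¬ (c = b) := fun hh => hbc hh.symm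
    have hmem : a ∉ ({b, c} : Finset (Fin r × Fin d)) := by simp [hab, hac]
    have h := hprod (fun p => if p = a then na else if p = b then nb else nc) ({a, b, c})
    simp only [Finset.prod_insert hmem, Finset.prod_pair hbc, if_neg hba, if_neg hca,
      if_neg hcb, eq_self_iff_true, if_true] at h
    rw [show (fun ω => X a ω ^ na * X b ω ^ nb * X c ω ^ nc)
        = fun ω => X a ω ^ na * (X b ω ^ nb * X c ω ^ nc) from funext fun ω => by ring, h,
      mom, mom, mom]
    ring
  -- four-variable expectations
  have E4 : ∀ (a b c e : Fin r × Fin d), a ≠ b → a ≠ c → a ≠ e → b ≠ c → b ≠ e → c ≠ e →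
      ∫ ω, X a ω * X b ω * X c ω * X e ω ∂P
        = (∫ x, x ^ 1 ∂achMeasure s) * (∫ x, x ^ 1 ∂achMeasure s)
          * (∫ x, x ^ 1 ∂achMeasure s) * ∫ x, x ^ 1 ∂achMeasure s := by
    intro a b c e hab hac hae hbc hbe hce
    have hmema : a ∉ ({b, c, e} : Finset (Fin r × Fin d)) := by simp [hab, hac, hae]
    have hmemb : b ∉ ({c, e} : Finset (Fin r × Fin d)) := by simp [hbc, hbe]
    have h := hprod (fun _ => 1) ({a, b, c, e})
    simp only [Finset.prod_insert hmema, Finset.prod_insert hmemb, Finset.prod_pair hce,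
      mom] at h
    simp only [pow_one] at h
    rw [show (fun ω => X a ω * X b ω * X c ω * X e ω)
        = fun ω => X a ω * (X b ω * (X c ω * X e ω)) from funext fun ω => by ring, h]
    simp only [pow_one]
    ring
  -- pair inequality helpers
  have pne1 : ∀ {i : Fin r} {j1 j2 : Fin d}, j1 ≠ j2 →
      ((i, j1) : Fin r × Fin d) ≠ (i, j2) :=
    fun h hh => h (congrArg Prod.snd hh)
  have pne2 : ∀ {i1 i2 : Fin r} {j1 j2 : Fin d}, i1 ≠ i2 →
      ((i1, j1) : Fin r × Fin d) ≠ (i2, j2) :=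
    fun h hh => h (congrArg Prod.fst hh)
  -- monomial expectation values
  have EM : ∀ (i i' : Fin r) (j k k' : Fin d),
      ∫ ω, X (i, j) ω * X (i, k) ω * X (i', j) ω * X (i', k') ω ∂P
        = if i = i' then (if k = k' then (if k = j then s else 1) else 0)
          else (if k = j then 1 else 0) * (if k' = j then 1 else 0) := by
    intro i i' j k k'
    by_cases hii : i = i'
    · subst hii
      by_cases hkk : k = k'
      · subst hkk
        by_cases hkj : k = j
        · subst hkj
          rw [show (fun ω => X (i, k) ω * X (i, k) ω * X (i, k) ω * X (i, k) ω)
              = fun ω => X (i, k) ω ^ 4 from funext fun ω => by ring, mom, M4]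
          simp
        · rw [show (fun ω => X (i, j) ω * X (i, k) ω * X (i, j) ω * X (i, k) ω)
              = fun ω => X (i, j) ω ^ 2 * X (i, k) ω ^ 2 from funext fun ω => by ring,
            E2 _ _ (pne1 fun h => hkj h.symm) 2 2, M2]
          simp [hkj]
      · by_cases hkj : k = j
        · subst hkj
          rw [show (fun ω => X (i, k) ω * X (i, k) ω * X (i, k) ω * X (i, k') ω)
              = fun ω => X (i, k) ω ^ 3 * X (i, k') ω ^ 1 from funext fun ω => by ring,
            E2 _ _ (pne1 hkk) 3 1, M3]
          simp [hkk]
        · by_cases hk'j : k' = j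
          · subst hk'j
            rw [show (fun ω => X (i, k') ω * X (i, k) ω * X (i, k') ω * X (i, k') ω)
                = fun ω => X (i, k') ω ^ 3 * X (i, k) ω ^ 1 from funext fun ω => by ring,
              E2 _ _ (pne1 fun h => hkk h.symm) 3 1, M3]
            simp [hkk]
          · rw [show (fun ω => X (i, j) ω * X (i, k) ω * X (i, j) ω * X (i, k') ω)
                = fun ω => X (i, j) ω ^ 2 * X (i, k) ω ^ 1 * X (i, k') ω ^ 1 from
                  funext fun ω => by ring,
              E3 _ _ _ (pne1 fun h => hkj h.symm) (pne1 fun h => hk'j h.symm)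
                (pne1 hkk) 2 1 1, M1]
            simp [hkk]
    · by_cases hkj : k = j
      · by_cases hk'j : k' = j
        · rw [show (fun ω => X (i, j) ω * X (i, k) ω * X (i', j) ω * X (i', k') ω)
              = fun ω => X (i, j) ω ^ 2 * X (i', j) ω ^ 2 from
                funext fun ω => by rw [hkj, hk'j]; ring,
            E2 _ _ (pne2 hii) 2 2, M2]
          simp [hii, hkj, hk'j]
        · rw [show (fun ω => X (i, j) ω * X (i, k) ω * X (i', j) ω * X (i', k') ω)
              = fun ω => X (i, j) ω ^ 2 * X (i', j) ω ^ 1 * X (i', k') ω ^ 1 from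
                funext fun ω => by rw [hkj]; ring,
            E3 _ _ _ (pne2 hii) (pne2 hii) (pne1 fun h => hk'j h.symm) 2 1 1, M1]
          simp [hii, hk'j]
      · by_cases hk'j : k' = j
        · rw [show (fun ω => X (i, j) ω * X (i, k) ω * X (i', j) ω * X (i', k') ω)
              = fun ω => X (i', j) ω ^ 2 * X (i, j) ω ^ 1 * X (i, k) ω ^ 1 from
                funext fun ω => by rw [hk'j]; ring,
            E3 _ _ _ (pne2 fun h => hii h.symm) (pne2 fun h => hii h.symm)
              (pne1 fun h => hkj h.symm) 2 1 1, M1]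
          simp [hii, hkj]
        · rw [E4 _ _ _ _ (pne1 fun h => hkj h.symm) (pne2 hii) (pne2 hii) (pne2 hii)
              (pne2 hii) (pne1 fun h => hk'j h.symm), M1]
          simp [hii, hkj]
  -- expand the integrand
  have hexp : ∀ ω, (∑ j, ((U ω)ᵀ *ᵥ (U ω *ᵥ g)) j ^ 2)
      = ∑ j, ∑ i, ∑ i', ∑ k, ∑ k',
          g k * g k' * (X (i, j) ω * X (i, k) ω * X (i', j) ω * X (i', k') ω) := by
    intro ω
    refine Finset.sum_congr rfl fun j _ => ?_
    simp only [Matrix.mulVec, dotProduct, Matrix.transpose_apply]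
    rw [sq, Finset.sum_mul_sum]
    refine Finset.sum_congr rfl fun i _ => Finset.sum_congr rfl fun i' _ => ?_
    rw [show (U ω i j * ∑ k, U ω i k * g k) * (U ω i' j * ∑ k', U ω i' k' * g k')
        = (∑ k, U ω i j * (U ω i k * g k)) * (∑ k', U ω i' j * (U ω i' k' * g k')) from by
          rw [Finset.mul_sum, Finset.mul_sum],
      Finset.sum_mul_sum]
    refine Finset.sum_congr rfl fun k _ => Finset.sum_congr rfl fun k' _ => ?_
    simp only [hXdef]
    ring
  rw [funext hexp]
  -- push the integral inside the sums
  have int0 : ∀ (i i' : Fin r) (j k k' : Fin d),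
      Integrable (fun ω => g k * g k'
        * (X (i, j) ω * X (i, k) ω * X (i', j) ω * X (i', k') ω)) P :=
    fun i i' j k k' => (hmono_int _ _ _ _).const_mul _
  have int1 : ∀ (i i' : Fin r) (j k : Fin d),
      Integrable (fun ω => ∑ k', g k * g k'
        * (X (i, j) ω * X (i, k) ω * X (i', j) ω * X (i', k') ω)) P :=
    fun i i' j k => integrable_finset_sum _ fun k' _ => int0 i i' j k k'
  have int2 : ∀ (i i' : Fin r) (j : Fin d),
      Integrable (fun ω => ∑ k, ∑ k', g k * g k'
        * (X (i, j) ω * X (i, k) ω * X (i', j) ω * X (i', k') ω)) P :=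
    fun i i' j => integrable_finset_sum _ fun k _ => int1 i i' j k
  have int3 : ∀ (i : Fin r) (j : Fin d),
      Integrable (fun ω => ∑ i', ∑ k, ∑ k', g k * g k'
        * (X (i, j) ω * X (i, k) ω * X (i', j) ω * X (i', k') ω)) P :=
    fun i j => integrable_finset_sum _ fun i' _ => int2 i i' j
  have int4 : ∀ (j : Fin d),
      Integrable (fun ω => ∑ i, ∑ i', ∑ k, ∑ k', g k * g k'
        * (X (i, j) ω * X (i, k) ω * X (i', j) ω * X (i', k') ω)) P :=
    fun j => integrable_finset_sum _ fun i _ => int3 i j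
  rw [integral_finset_sum _ fun j _ => int4 j]
  have hpush : ∀ j : Fin d,
      ∫ ω, ∑ i, ∑ i', ∑ k, ∑ k', g k * g k'
        * (X (i, j) ω * X (i, k) ω * X (i', j) ω * X (i', k') ω) ∂P
      = ∑ i : Fin r, ∑ i' : Fin r, ∑ k : Fin d, ∑ k' : Fin d, g k * g k'
          * (if i = i' then (if k = k' then (if k = j then s else 1) else 0)
             else (if k = j then 1 else 0) * (if k' = j then 1 else 0)) := by
    intro j
    rw [integral_finset_sum _ fun i _ => int3 i j]
    refine Finset.sum_congr rfl fun i _ => ?_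
    rw [integral_finset_sum _ fun i' _ => int2 i i' j]
    refine Finset.sum_congr rfl fun i' _ => ?_
    rw [integral_finset_sum _ fun k _ => int1 i i' j k]
    refine Finset.sum_congr rfl fun k _ => ?_
    rw [integral_finset_sum _ fun k' _ => int0 i i' j k k']
    refine Finset.sum_congr rfl fun k' _ => ?_
    rw [integral_const_mul, EM]
  simp only [hpush]
  -- evaluate the sums
  set G : ℝ := ∑ t, g t ^ 2 with hG
  have hinner : ∀ (j : Fin d) (i i' : Fin r),
      (∑ k : Fin d, ∑ k' : Fin d, g k * g k'
        * (if i = i' then (if k = k' then (if k = j then s else 1) else 0)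
           else (if k = j then 1 else 0) * (if k' = j then 1 else 0)))
      = if i = i' then (s - 1) * g j ^ 2 + G else g j ^ 2 := by
    intro j i i'
    by_cases hii : i = i'
    · simp only [if_pos hii]
      have h1 : ∀ k : Fin d, (∑ k', g k * g k'
          * (if k = k' then (if k = j then s else 1) else 0))
          = g k * g k * (if k = j then s else 1) := by
        intro k
        rw [show (fun k' => g k * g k' * (if k = k' then (if k = j then s else 1) else 0))
            = fun k' => (if k = k' then g k * g k' * (if k = j then s else 1) else 0) from
              funext fun k' => by by_cases h : k = k' <;> simp [h]]
        rw [Finset.sum_ite_eq]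
        simp
      rw [Finset.sum_congr rfl fun k _ => h1 k]
      rw [show (fun k => g k * g k * (if k = j then s else 1))
          = fun k => g k ^ 2 + (if k = j then (s - 1) * g k ^ 2 else 0) from
            funext fun k => by by_cases h : k = j <;> simp [h] <;> ring]
      rw [Finset.sum_add_distrib, Finset.sum_ite_eq']
      simp [hG]
      ring
    · simp only [if_neg hii]
      have hfk : ∀ k : Fin d, (∑ k', g k * g k'
            * ((if k = j then (1:ℝ) else 0) * (if k' = j then (1:ℝ) else 0)))
          = (if k = j then g k else 0) * ∑ k', (if k' = j then g k' else 0) := by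
        intro k
        rw [Finset.mul_sum]
        refine Finset.sum_congr rfl fun k' _ => ?_
        by_cases h : k = j <;> by_cases h' : k' = j <;> simp [h, h']
      rw [Finset.sum_congr rfl fun k _ => hfk k, ← Finset.sum_mul]
      rw [Finset.sum_ite_eq']
      simp [pow_two]
  simp only [hinner]
  have houter : ∀ (j : Fin d) (i : Fin r),
      (∑ i' : Fin r, if i = i' then (s - 1) * g j ^ 2 + G else g j ^ 2)
      = (r : ℝ) * g j ^ 2 + ((s - 1) * g j ^ 2 + G - g j ^ 2) := by
    intro j i
    rw [show (fun i' : Fin r => if i = i' then (s - 1) * g j ^ 2 + G else g j ^ 2)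
        = fun i' : Fin r => g j ^ 2
            + (if i = i' then (s - 1) * g j ^ 2 + G - g j ^ 2 else 0) from
          funext fun i' => by by_cases h : i = i' <;> simp [h]]
    rw [Finset.sum_add_distrib, Finset.sum_ite_eq, Finset.sum_const]
    simp [Finset.card_univ, mul_comm]
  simp only [houter]
  simp only [Finset.sum_const, Finset.card_univ, Fintype.card_fin, nsmul_eq_mul]
  have hj : ∀ j : Fin d, (r:ℝ) * ((r:ℝ) * g j ^ 2 + ((s - 1) * g j ^ 2 + G - g j ^ 2))
      = ((r:ℝ) ^ 2 + (r:ℝ) * (s - 2)) * g j ^ 2 + (r:ℝ) * G := fun j => by ring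
  simp only [hj]
  rw [Finset.sum_add_distrib, ← Finset.mul_sum, ← hG, Finset.sum_const, Finset.card_univ,
    Fintype.card_fin, nsmul_eq_mul]
  ring
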